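/- Let m ∈ ℝ and s > 0, and let g(x) = φ(x; m, s²). Let L : ℝ → ℝ be continuously differentiable and positive, and assume there are constants C > 0 and k ∈ ℕ such that |L(x)| ≤ C(1 + |x|)^k and |L'(x)| ≤ C(1 + |x|)^k for all x. Then Z = ∫ L(x) g(x) dx is finite and positive, and (1/Z) ∫ x L(x) g(x) dx = m + s² (1/Z) ∫ L'(x) g(x) dx; i.e., the mean of the Gaussian density g tilted by the likelihood L equals m plus s² times the tilted expectation of the log-likelihood gradient (log L)'. -/

import Mathlib

open MeasureTheory

/-- The Gaussian probability density with mean `m` and variance `τ2`. -/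
noncomputable def gaussPDF (x m τ2 : ℝ) : ℝ :=
  (Real.sqrt (2 * Real.pi * τ2))⁻¹ * Real.exp (-((x - m) ^ 2) / (2 * τ2))

open Real in
lemma aux_abs_pow (b : ℝ) (hb : 0 < b) (n : ℕ) :
    Integrable fun x : ℝ => |x| ^ n * Real.exp (-b * x ^ 2) := by
  have h : Integrable fun x : ℝ => x ^ n * Real.exp (-b * x ^ 2) := by
    have h2 := integrable_rpow_mul_exp_neg_mul_sq hb
      (s := (n : ℝ)) (by exact_mod_cast lt_of_lt_of_le neg_one_lt_zero (Nat.cast_nonneg n))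
    simpa [Real.rpow_natCast] using h2
  refine h.abs.congr (Filter.Eventually.of_forall fun x => ?_)
  simp [abs_mul, abs_pow, abs_of_nonneg (Real.exp_pos _).le]

lemma aux_one_add (b : ℝ) (hb : 0 < b) (n : ℕ) :
    Integrable fun x : ℝ => (1 + |x|) ^ n * Real.exp (-b * x ^ 2) := by
  have hdom : Integrable fun x : ℝ =>
      (2:ℝ) ^ n * (Real.exp (-b * x ^ 2) + |x| ^ n * Real.exp (-b * x ^ 2)) :=
    ((integrable_exp_neg_mul_sq hb).add (aux_abs_pow b hb n)).const_mul _
  refine hdom.mono' ?_ (Filter.Eventually.of_forall fun x => ?_)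
  · exact (((continuous_const.add continuous_abs).pow n).mul
      ((continuous_const.mul (continuous_pow 2)).rexp)).aestronglyMeasurable
  · have hx : (0:ℝ) ≤ |x| := abs_nonneg x
    have h1 : (1 + |x|) ≤ 2 * max 1 |x| := by
      have := le_max_left (1:ℝ) |x|; have := le_max_right (1:ℝ) |x|; linarith
    have h2 : (max 1 |x|) ^ n ≤ 1 + |x| ^ n := by
      rcases le_total (1:ℝ) |x| with h | h
      · rw [max_eq_right h]; nlinarith [pow_nonneg hx n]
      · rw [max_eq_left h]; simp only [one_pow]; nlinarith [pow_nonneg hx n]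
    have h3 : (1 + |x|) ^ n ≤ 2 ^ n * (1 + |x| ^ n) := by
      calc (1 + |x|) ^ n ≤ (2 * max 1 |x|) ^ n := by
            apply pow_le_pow_left₀ (by linarith) h1
        _ = 2 ^ n * (max 1 |x|) ^ n := by rw [mul_pow]
        _ ≤ 2 ^ n * (1 + |x| ^ n) := by
            apply mul_le_mul_of_nonneg_left h2 (by positivity)
    have he : (0:ℝ) < Real.exp (-b * x ^ 2) := Real.exp_pos _
    rw [Real.norm_eq_abs, abs_mul, abs_of_nonneg (by positivity : (0:ℝ) ≤ (1+|x|)^n),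
      abs_of_nonneg he.le]
    nlinarith

lemma aux_dom (b : ℝ) (hb : 0 < b) (m C : ℝ) (hC : 0 ≤ C) (k : ℕ) {h : ℝ → ℝ}
    (hcont : Continuous h) (hbnd : ∀ x, |h x| ≤ C * (1 + |x|) ^ k) :
    Integrable fun x : ℝ => h x * Real.exp (-b * (x - m) ^ 2) := by
  have base : Integrable fun x : ℝ => (1 + |x - m|) ^ k * Real.exp (-b * (x - m) ^ 2) :=
    (aux_one_add b hb k).comp_sub_right m
  refine (base.const_mul (C * (1 + |m|) ^ k)).mono'
    ((hcont.mul ((continuous_const.mul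
      ((continuous_id.sub continuous_const).pow 2)).rexp)).aestronglyMeasurable)
    (Filter.Eventually.of_forall fun x => ?_)
  have he : (0:ℝ) < Real.exp (-b * (x - m) ^ 2) := Real.exp_pos _
  have key : (1:ℝ) + |x| ≤ (1 + |m|) * (1 + |x - m|) := by
    have h1 : |x| ≤ |m| + |x - m| := by
      calc |x| = |m + (x - m)| := by ring_nf
        _ ≤ |m| + |x - m| := abs_add_le _ _
    nlinarith [abs_nonneg m, abs_nonneg (x - m), mul_nonneg (abs_nonneg m) (abs_nonneg (x-m))]
  have hk : (1 + |x|) ^ k ≤ (1 + |m|) ^ k * (1 + |x - m|) ^ k := by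
    calc (1 + |x|) ^ k ≤ ((1 + |m|) * (1 + |x - m|)) ^ k :=
          pow_le_pow_left₀ (by positivity) key k
      _ = (1 + |m|) ^ k * (1 + |x - m|) ^ k := mul_pow _ _ _
  rw [Real.norm_eq_abs, abs_mul, abs_of_nonneg he.le]
  calc |h x| * Real.exp (-b * (x - m) ^ 2)
      ≤ (C * (1 + |x|) ^ k) * Real.exp (-b * (x - m) ^ 2) :=
        mul_le_mul_of_nonneg_right (hbnd x) he.le
    _ ≤ (C * ((1 + |m|) ^ k * (1 + |x - m|) ^ k)) * Real.exp (-b * (x - m) ^ 2) := by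
        apply mul_le_mul_of_nonneg_right _ he.le
        exact mul_le_mul_of_nonneg_left hk hC
    _ = C * (1 + |m|) ^ k * ((1 + |x - m|) ^ k * Real.exp (-b * (x - m) ^ 2)) := by ring

/-- **Tilted Gaussian mean identity (Stein / integration by parts).**
Let `g = φ(·; m, s²)` with `s > 0`, and let `L` be a positive `C¹` likelihood with `L` and
`L'` of polynomial growth.  Then `Z = ∫ L g` is finite (i.e. `L·g` is integrable) and
positive, and `(1/Z) ∫ x L(x) g(x) dx = m + s² (1/Z) ∫ L'(x) g(x) dx`. -/
theorem tilted_gaussian_mean_identity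
    (m s : ℝ) (hs : 0 < s)
    (g : ℝ → ℝ) (hg : ∀ x, g x = gaussPDF x m (s ^ 2))
    (L : ℝ → ℝ) (hL : ContDiff ℝ 1 L) (hLpos : ∀ x, 0 < L x)
    (C : ℝ) (hC : 0 < C) (k : ℕ)
    (hLbound : ∀ x, |L x| ≤ C * (1 + |x|) ^ k)
    (hL'bound : ∀ x, |deriv L x| ≤ C * (1 + |x|) ^ k) :
    Integrable (fun x => L x * g x) ∧
    0 < ∫ x, L x * g x ∧
    (∫ x, L x * g x)⁻¹ * ∫ x, x * L x * g x
      = m + s ^ 2 * ((∫ x, L x * g x)⁻¹ * ∫ x, deriv L x * g x) := by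
  have hb : (0:ℝ) < (2 * s ^ 2)⁻¹ := by positivity
  set b : ℝ := (2 * s ^ 2)⁻¹ with hbdef
  have hc : (0:ℝ) < (Real.sqrt (2 * Real.pi * s ^ 2))⁻¹ := by
    have h2 : (0:ℝ) < 2 * Real.pi * s ^ 2 := by positivity
    exact inv_pos.mpr (Real.sqrt_pos.mpr h2)
  set c : ℝ := (Real.sqrt (2 * Real.pi * s ^ 2))⁻¹ with hcdef
  have hgE : ∀ x, g x = c * Real.exp (-b * (x - m) ^ 2) := by
    intro x; rw [hg x]; unfold gaussPDF
    congr 1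
    rw [hbdef]; ring
  have hgpos : ∀ x, 0 < g x := fun x => by
    rw [hgE x]; exact mul_pos hc (Real.exp_pos _)
  have IZ : Integrable fun x => L x * g x := by
    have h := (aux_dom b hb m C hC.le k hL.continuous hLbound).const_mul c
    refine h.congr (Filter.Eventually.of_forall fun x => ?_)
    simp only [hgE x]; ring
  have Ix : Integrable fun x => x * L x * g x := by
    have hcont : Continuous fun x : ℝ => x * L x := continuous_id.mul hL.continuous
    have hbnd : ∀ x, |x * L x| ≤ C * (1 + |x|) ^ (k + 1) := by
      intro x
      have h2 : |x| * |L x| ≤ (1 + |x|) * (C * (1 + |x|) ^ k) :=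
        mul_le_mul (by linarith [abs_nonneg x]) (hLbound x) (abs_nonneg _) (by positivity)
      calc |x * L x| = |x| * |L x| := abs_mul _ _
        _ ≤ (1 + |x|) * (C * (1 + |x|) ^ k) := h2
        _ = C * (1 + |x|) ^ (k + 1) := by rw [pow_succ]; ring
    have h := (aux_dom b hb m C hC.le (k + 1) hcont hbnd).const_mul c
    refine h.congr (Filter.Eventually.of_forall fun x => ?_)
    simp only [hgE x]; ring
  have Id' : Integrable fun x => deriv L x * g x := by
    have h := (aux_dom b hb m C hC.le k (hL.continuous_deriv le_rfl) hL'bound).const_mul c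
    refine h.congr (Filter.Eventually.of_forall fun x => ?_)
    simp only [hgE x]; ring
  have Ixm : Integrable fun x => (x - m) * L x * g x := by
    have hcont : Continuous fun x : ℝ => (x - m) * L x :=
      (continuous_id.sub continuous_const).mul hL.continuous
    have hbnd : ∀ x, |(x - m) * L x| ≤ (C * (1 + |m|)) * (1 + |x|) ^ (k + 1) := by
      intro x
      have h1 : |x - m| ≤ (1 + |m|) * (1 + |x|) := by
        have := abs_sub x m
        have h3 := abs_nonneg x; have h4 := abs_nonneg m
        have h5 : |x - m| ≤ |x| + |m| := abs_sub _ _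
        nlinarith [mul_nonneg h4 h3]
      have h2 : |x - m| * |L x| ≤ ((1 + |m|) * (1 + |x|)) * (C * (1 + |x|) ^ k) :=
        mul_le_mul h1 (hLbound x) (abs_nonneg _) (by positivity)
      calc |(x - m) * L x| = |x - m| * |L x| := abs_mul _ _
        _ ≤ ((1 + |m|) * (1 + |x|)) * (C * (1 + |x|) ^ k) := h2
        _ = (C * (1 + |m|)) * (1 + |x|) ^ (k + 1) := by rw [pow_succ]; ring
    have h := (aux_dom b hb m (C * (1 + |m|)) (by positivity) (k + 1) hcont hbnd).const_mul c
    refine h.congr (Filter.Eventually.of_forall fun x => ?_)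
    simp only [hgE x]; ring
  have gfun : g = fun y => c * Real.exp (-b * (y - m) ^ 2) := funext hgE
  have hderiv : ∀ x, HasDerivAt (fun x => L x * g x)
      (deriv L x * g x - (s ^ 2)⁻¹ * ((x - m) * L x * g x)) x := by
    intro x
    have h1 : HasDerivAt (fun y : ℝ => y - m) 1 x := (hasDerivAt_id x).sub_const m
    have h2 := h1.pow 2
    have h3 := h2.const_mul (-b)
    have h4 := h3.exp
    have h5 := h4.const_mul c
    have hgd : HasDerivAt g
        (c * (Real.exp (-b * (x - m) ^ 2) * (-b * (↑2 * (x - m) ^ (2 - 1) * 1)))) x := by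
      rw [gfun]; exact h5
    have hLd : HasDerivAt L (deriv L x) x := (hL.differentiable one_ne_zero x).hasDerivAt
    have hmul := hLd.mul hgd
    refine hmul.congr_deriv ?_
    rw [hgE x, hbdef]
    have hs2 : s ^ 2 ≠ 0 := by positivity
    field_simp
    ring
  have IF' : Integrable fun x => deriv L x * g x - (s ^ 2)⁻¹ * ((x - m) * L x * g x) :=
    Id'.sub (Ixm.const_mul _)
  have hzero : ∫ x, (deriv L x * g x - (s ^ 2)⁻¹ * ((x - m) * L x * g x)) = 0 :=
    integral_eq_zero_of_hasDerivAt_of_integrable hderiv IF' IZ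
  rw [integral_sub Id' (Ixm.const_mul _), integral_const_mul _ _] at hzero
  have hsub : ∫ x, deriv L x * g x = (s ^ 2)⁻¹ * ∫ x, (x - m) * L x * g x := by
    linarith
  have hZpos : 0 < ∫ x, L x * g x := by
    rw [integral_pos_iff_support_of_nonneg
      (fun x => (mul_pos (hLpos x) (hgpos x)).le) IZ]
    have hsupp : Function.support (fun x => L x * g x) = Set.univ :=
      Set.eq_univ_of_forall fun x => (mul_pos (hLpos x) (hgpos x)).ne'
    rw [hsupp, Real.volume_univ]
    exact ENNReal.zero_lt_top
  have hZ : (∫ x, L x * g x) ≠ 0 := ne_of_gt hZpos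
  have hxsplit : ∫ x, x * L x * g x
      = (∫ x, (x - m) * L x * g x) + m * ∫ x, L x * g x := by
    have heq : (fun x => x * L x * g x)
        = fun x => (x - m) * L x * g x + m * (L x * g x) := by
      funext x; ring
    rw [heq, integral_add Ixm (IZ.const_mul m), integral_const_mul _ _]
  refine ⟨IZ, hZpos, ?_⟩
  rw [hxsplit, hsub]
  have hs2 : s ^ 2 ≠ 0 := by positivity
  field_simp
  ring
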